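/- Let b₂,…,b_n ∈ ℂ be nonzero scalars with b_i^ℓ ≠ b_j^ℓ for all 2 ≤ i < j ≤ n, let b = diag(0, b₂,…,b_n) ∈ Mat_n(ℂ), and let X_b = (b, b, …, b) ∈ V. Then the stabilizer {g ∈ G : g·X_b = X_b} consists exactly of the tuples (g^{(0)},…,g^{(ℓ−1)}) of invertible diagonal matrices whose (k,k)-entries for 2 ≤ k ≤ n are independent of the index: g^{(i)}_{kk} = g^{(j)}_{kk} for all i, j and all k ≥ 2; in particular this stabilizer is isomorphic as a group to (ℂ^×)^ℓ × (ℂ^×)^{n−1}. -/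

import Mathlib

/-! STATEMENT 14: for `G = GL_n(ℂ)^ℓ` acting on `V = Mat_n(ℂ)^ℓ` by
`(g·X)⁽ⁱ⁾ = g⁽ⁱ⁺¹⁾X⁽ⁱ⁾(g⁽ⁱ⁾)⁻¹`, and `X_b = (b,…,b)` with `b = diag(0,b₂,…,b_n)`,
`b_i ≠ 0`, `b_i^ℓ` pairwise distinct, the stabilizer of `X_b` consists exactly of the
tuples of invertible diagonal matrices whose `(k,k)`-entries for `k ≥ 2` do not
depend on the index; in particular it is isomorphic to `(ℂ^×)^ℓ × (ℂ^×)^{n-1}`. -/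


noncomputable section

set_option maxHeartbeats 1000000

variable (n ℓ : ℕ) [NeZero ℓ]

/-- The representation space `V = Rep(Q_ℓ, nδ) = Mat_n(ℂ)^ℓ`. -/
abbrev Vq : Type := Fin ℓ → Matrix (Fin n) (Fin n) ℂ

/-- The group `G = GL_n(ℂ)^ℓ`. -/
abbrev Gq : Type := Fin ℓ → Matrix.GeneralLinearGroup (Fin n) ℂ

/-- The action `(g·X)⁽ⁱ⁾ = g⁽ⁱ⁺¹⁾ X⁽ⁱ⁾ (g⁽ⁱ⁾)⁻¹` (indices mod ℓ). -/
def qAct (g : Gq n ℓ) (M : Vq n ℓ) : Vq n ℓ :=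
  fun i => (g (i + 1) : Matrix (Fin n) (Fin n) ℂ) * M i * (((g i)⁻¹ : Matrix.GeneralLinearGroup (Fin n) ℂ) : Matrix (Fin n) (Fin n) ℂ)

lemma qAct_eq_iff (g : Gq n ℓ) (M : Vq n ℓ) :
    qAct n ℓ g M = M ↔ ∀ i, (g (i + 1) : Matrix (Fin n) (Fin n) ℂ) * M i
      = M i * (g i : Matrix (Fin n) (Fin n) ℂ) := by
  constructor
  · intro h i
    have hi := congrFun h i
    simp only [qAct] at hi
    calc (g (i + 1) : Matrix (Fin n) (Fin n) ℂ) * M i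
        = ((g (i + 1) : Matrix (Fin n) (Fin n) ℂ) * M i * ((g i)⁻¹ :
            Matrix.GeneralLinearGroup (Fin n) ℂ)) * (g i : Matrix (Fin n) (Fin n) ℂ) := by
          rw [Units.inv_mul_cancel_right]
      _ = M i * (g i : Matrix (Fin n) (Fin n) ℂ) := by rw [hi]
  · intro h
    funext i
    simp only [qAct]
    rw [h i, Units.mul_inv_cancel_right]

/-- The stabilizer of `M ∈ V` in `G`, as a subgroup. -/
def qStab (M : Vq n ℓ) : Subgroup (Gq n ℓ) where
  carrier := {g | qAct n ℓ g M = M}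
  one_mem' := by
    simp only [Set.mem_setOf_eq, qAct_eq_iff]
    intro i
    simp
  mul_mem' := by
    intro g h hg hh
    simp only [Set.mem_setOf_eq, qAct_eq_iff] at *
    intro i
    have : ((g * h) (i + 1) : Matrix (Fin n) (Fin n) ℂ) = (g (i+1) : Matrix (Fin n) (Fin n) ℂ) * (h (i+1) : Matrix (Fin n) (Fin n) ℂ) := rfl
    rw [this, mul_assoc, hh i, ← mul_assoc, hg i, mul_assoc]
    rfl
  inv_mem' := by
    intro g hg
    simp only [Set.mem_setOf_eq, qAct_eq_iff] at *
    intro i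
    have hgi := hg i
    calc (g⁻¹ (i + 1) : Matrix (Fin n) (Fin n) ℂ) * M i
        = (g⁻¹ (i + 1) : Matrix (Fin n) (Fin n) ℂ) * M i * (g i : Matrix (Fin n) (Fin n) ℂ) * ((g i)⁻¹ : Matrix.GeneralLinearGroup (Fin n) ℂ) := by
          rw [Units.mul_inv_cancel_right]
      _ = (g⁻¹ (i + 1) : Matrix (Fin n) (Fin n) ℂ) * ((g (i+1) : Matrix (Fin n) (Fin n) ℂ) * M i) * ((g i)⁻¹ : Matrix.GeneralLinearGroup (Fin n) ℂ) := by
          rw [mul_assoc ((g⁻¹ (i + 1) : Matrix (Fin n) (Fin n) ℂ)), hgi]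
      _ = M i * (g⁻¹ i : Matrix (Fin n) (Fin n) ℂ) := by
          have h1 : (g⁻¹ (i + 1) : Matrix (Fin n) (Fin n) ℂ) * (g (i+1) : Matrix (Fin n) (Fin n) ℂ) = 1 := by
            rw [← Units.val_mul]
            simp
          rw [← mul_assoc, h1, one_mul]
          rfl

namespace Stmt14Aux

-- cyclic iteration lemma
open Fin.CommRing Fin.NatCast in
lemma iterate_pow {f : Fin ℓ → ℂ} {c d : ℂ}
    (hstep : ∀ i, f (i + 1) * d = c * f i) :
    ∀ (m : ℕ) (i : Fin ℓ), f (i + (m : Fin ℓ)) * d ^ m = c ^ m * f i := by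
  intro m
  induction m with
  | zero => intro i; simp
  | succ m ih =>
    intro i
    have hcast : ((m + 1 : ℕ) : Fin ℓ) = (m : Fin ℓ) + 1 := by push_cast; ring
    rw [hcast, ← add_assoc, pow_succ]
    calc f (i + (m : Fin ℓ) + 1) * (d ^ m * d)
        = (f ((i + (m : Fin ℓ)) + 1) * d) * d ^ m := by ring
      _ = (c * f (i + (m : Fin ℓ))) * d ^ m := by rw [hstep]
      _ = c * (f (i + (m : Fin ℓ)) * d ^ m) := by ring
      _ = c * (c ^ m * f i) := by rw [ih]
      _ = c ^ (m + 1) * f i := by ring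

open Fin.CommRing Fin.NatCast in
lemma const_of_step {f : Fin ℓ → ℂ} (hstep : ∀ i, f (i + 1) = f i) :
    ∀ i j, f i = f j := by
  have key : ∀ m : ℕ, f (m : Fin ℓ) = f 0 := by
    intro m
    induction m with
    | zero => simp
    | succ m ih =>
      have hcast : ((m + 1 : ℕ) : Fin ℓ) = (m : Fin ℓ) + 1 := by push_cast; ring
      rw [hcast, hstep, ih]
  intro i j
  rw [← Fin.cast_val_eq_self i, ← Fin.cast_val_eq_self j, key, key]

lemma diag_ne_zero {n : ℕ} (g : Matrix.GeneralLinearGroup (Fin n) ℂ)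
    (h : ∀ k l : Fin n, k ≠ l → (g : Matrix (Fin n) (Fin n) ℂ) k l = 0) (k : Fin n) :
    (g : Matrix (Fin n) (Fin n) ℂ) k k ≠ 0 := by
  have hdiag : (g : Matrix (Fin n) (Fin n) ℂ)
      = Matrix.diagonal (fun k => (g : Matrix (Fin n) (Fin n) ℂ) k k) := by
    ext a c
    rw [Matrix.diagonal_apply]
    split_ifs with hac
    · subst hac; rfl
    · exact h a c hac
  have hu : IsUnit ((g : Matrix (Fin n) (Fin n) ℂ).det) := by
    exact (Matrix.isUnit_iff_isUnit_det _).mp g.isUnit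
  rw [hdiag, Matrix.det_diagonal] at hu
  have hne := isUnit_iff_ne_zero.mp hu
  intro h0
  exact hne (Finset.prod_eq_zero (Finset.mem_univ k) h0)

end Stmt14Aux

namespace Stmt14Aux

open Fin.CommRing Fin.NatCast in
lemma char (n ℓ : ℕ) [NeZero ℓ] [NeZero n] (b : Fin n → ℂ)
    (hb0 : b 0 = 0)
    (hbne : ∀ i : Fin n, i ≠ 0 → b i ≠ 0)
    (hbdist : ∀ i j : Fin n, i ≠ 0 → j ≠ 0 → i ≠ j → b i ^ ℓ ≠ b j ^ ℓ)
    (g : Gq n ℓ) :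
    (∀ i, (g (i + 1) : Matrix (Fin n) (Fin n) ℂ) * Matrix.diagonal b
      = Matrix.diagonal b * (g i : Matrix (Fin n) (Fin n) ℂ)) ↔
      ((∀ (i : Fin ℓ) (k l : Fin n), k ≠ l → (g i : Matrix (Fin n) (Fin n) ℂ) k l = 0) ∧
       (∀ (i j : Fin ℓ) (k : Fin n), k ≠ 0 →
         (g i : Matrix (Fin n) (Fin n) ℂ) k k = (g j : Matrix (Fin n) (Fin n) ℂ) k k)) := by
  have hpow : ∀ k l : Fin n, k ≠ l → b k ^ ℓ ≠ b l ^ ℓ := by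
    intro k l hkl
    by_cases hk : k = 0
    · subst hk
      rw [hb0, zero_pow (NeZero.ne ℓ)]
      exact fun h => pow_ne_zero ℓ (hbne l (Ne.symm hkl)) h.symm
    · by_cases hl : l = 0
      · subst hl
        rw [hb0, zero_pow (NeZero.ne ℓ)]
        exact pow_ne_zero ℓ (hbne k hk)
      · exact hbdist k l hk hl hkl
  constructor
  · intro h
    have hC : ∀ i (k l : Fin n),
        (g (i + 1) : Matrix (Fin n) (Fin n) ℂ) k l * b l = b k * (g i : Matrix (Fin n) (Fin n) ℂ) k l := by
      intro i k l
      have := congrFun (congrFun (h i) k) l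
      rwa [Matrix.mul_diagonal, Matrix.diagonal_mul] at this
    constructor
    · intro i k l hkl
      have hiter := iterate_pow ℓ (f := fun i => (g i : Matrix (Fin n) (Fin n) ℂ) k l)
        (c := b k) (d := b l) (fun i => hC i k l) ℓ i
      rw [Fin.natCast_self, add_zero] at hiter
      have hz : (g i : Matrix (Fin n) (Fin n) ℂ) k l * (b l ^ ℓ - b k ^ ℓ) = 0 := by
        linear_combination hiter
      rcases mul_eq_zero.mp hz with h0 | h0
      · exact h0
      · exact absurd (sub_eq_zero.mp h0) (fun h' => hpow k l hkl h'.symm)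
    · intro i j k hk
      refine const_of_step ℓ (f := fun i => (g i : Matrix (Fin n) (Fin n) ℂ) k k) ?_ i j
      intro i'
      have := hC i' k k
      exact mul_right_cancel₀ (hbne k hk) (by rw [this]; ring)
  · rintro ⟨hdiag, hconst⟩ i
    ext k l
    rw [Matrix.mul_diagonal, Matrix.diagonal_mul]
    by_cases hkl : k = l
    · subst hkl
      by_cases hk : k = 0
      · subst hk; rw [hb0]; ring
      · rw [hconst (i + 1) i k hk]; ring
    · rw [hdiag (i+1) k l hkl, hdiag i k l hkl]; ring

end Stmt14Aux

namespace Stmt14Aux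

def dvec {n ℓ : ℕ} (p : (Fin ℓ → ℂˣ) × (Fin (n - 1) → ℂˣ)) (i : Fin ℓ) (k : Fin n) : ℂˣ :=
  if h : k.1 = 0 then p.1 i else p.2 ⟨k.1 - 1, by omega⟩

def ginv {n : ℕ} (e : Fin n → ℂˣ) : Matrix.GeneralLinearGroup (Fin n) ℂ :=
  ⟨Matrix.diagonal (fun k => (e k : ℂ)), Matrix.diagonal (fun k => (((e k)⁻¹ : ℂˣ) : ℂ)),
    by rw [Matrix.diagonal_mul_diagonal]
       convert Matrix.diagonal_one using 2
       exact funext fun k => Units.mul_inv _,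
    by rw [Matrix.diagonal_mul_diagonal]
       convert Matrix.diagonal_one using 2
       exact funext fun k => Units.inv_mul _⟩

@[simp] lemma ginv_coe {n : ℕ} (e : Fin n → ℂˣ) :
    (ginv e : Matrix (Fin n) (Fin n) ℂ) = Matrix.diagonal (fun k => (e k : ℂ)) := rfl

lemma dvec_zero {n ℓ : ℕ} [NeZero n] (p : (Fin ℓ → ℂˣ) × (Fin (n - 1) → ℂˣ)) (i : Fin ℓ) :
    dvec p i 0 = p.1 i := by simp [dvec]

lemma dvec_ne_zero {n ℓ : ℕ} [NeZero n] (p : (Fin ℓ → ℂˣ) × (Fin (n - 1) → ℂˣ)) (i : Fin ℓ)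
    (k : Fin n) (hk : k ≠ 0) : dvec p i k = p.2 ⟨k.1 - 1, by have := k.2; omega⟩ := by
  have hk' : k.1 ≠ 0 := fun h => hk (Fin.ext (by simp [h]))
  simp [dvec, hk']

end Stmt14Aux

namespace Stmt14Aux

lemma mul_diag_entry {n : ℕ} (A B : Matrix (Fin n) (Fin n) ℂ)
    (hA : ∀ k l : Fin n, k ≠ l → A k l = 0) (k : Fin n) :
    (A * B) k k = A k k * B k k := by
  rw [Matrix.mul_apply]
  refine Finset.sum_eq_single k (fun j _ hj => ?_) (fun h => absurd (Finset.mem_univ k) h)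
  rw [hA k j (Ne.symm hj), zero_mul]

end Stmt14Aux

theorem stmt_14 (n ℓ : ℕ) [NeZero ℓ] [NeZero n] (hn : 2 ≤ n) (b : Fin n → ℂ)
    -- `b = diag(0, b₂, …, b_n)` with all `b_i ≠ 0` and `b_i^ℓ ≠ b_j^ℓ` for `i ≠ j`
    (hb0 : b 0 = 0)
    (hbne : ∀ i : Fin n, i ≠ 0 → b i ≠ 0)
    (hbdist : ∀ i j : Fin n, i ≠ 0 → j ≠ 0 → i ≠ j → b i ^ ℓ ≠ b j ^ ℓ) :
    -- the stabilizer of `X_b = (b, b, …, b)` consists exactly of the tuples of invertible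
    -- diagonal matrices whose `(k,k)`-entries, for `k ≠ 0`, are independent of the index
    (∀ g : Gq n ℓ, g ∈ qStab n ℓ (fun _ => Matrix.diagonal b) ↔
      ((∀ (i : Fin ℓ) (k l : Fin n), k ≠ l → (g i : Matrix (Fin n) (Fin n) ℂ) k l = 0) ∧
       (∀ (i j : Fin ℓ) (k : Fin n), k ≠ 0 →
         (g i : Matrix (Fin n) (Fin n) ℂ) k k = (g j : Matrix (Fin n) (Fin n) ℂ) k k))) ∧
    -- in particular, the stabilizer is isomorphic as a group to `(ℂ^×)^ℓ × (ℂ^×)^{n-1}`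
    Nonempty (qStab n ℓ (fun _ => Matrix.diagonal b) ≃* ((Fin ℓ → ℂˣ) × (Fin (n - 1) → ℂˣ))) := by
  classical
  have hmem : ∀ g : Gq n ℓ, g ∈ qStab n ℓ (fun _ => Matrix.diagonal b) ↔
      ∀ i, (g (i + 1) : Matrix (Fin n) (Fin n) ℂ) * Matrix.diagonal b
        = Matrix.diagonal b * (g i : Matrix (Fin n) (Fin n) ℂ) := by
    intro g
    exact (qAct_eq_iff n ℓ g (fun _ => Matrix.diagonal b))
  have hchar : ∀ g : Gq n ℓ, g ∈ qStab n ℓ (fun _ => Matrix.diagonal b) ↔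
      ((∀ (i : Fin ℓ) (k l : Fin n), k ≠ l → (g i : Matrix (Fin n) (Fin n) ℂ) k l = 0) ∧
       (∀ (i j : Fin ℓ) (k : Fin n), k ≠ 0 →
         (g i : Matrix (Fin n) (Fin n) ℂ) k k = (g j : Matrix (Fin n) (Fin n) ℂ) k k)) :=
    fun g => (hmem g).trans (Stmt14Aux.char n ℓ b hb0 hbne hbdist g)
  have hne : ∀ g : Gq n ℓ, g ∈ qStab n ℓ (fun _ => Matrix.diagonal b) →
      ∀ (i : Fin ℓ) (k : Fin n), (g i : Matrix (Fin n) (Fin n) ℂ) k k ≠ 0 :=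
    fun g hg i k => Stmt14Aux.diag_ne_zero (g i)
      (fun k l hkl => ((hchar g).mp hg).1 i k l hkl) k
  refine ⟨hchar, ⟨?_⟩⟩
  refine ⟨⟨fun g =>
      ((fun i => Units.mk0 ((g.1 i : Matrix (Fin n) (Fin n) ℂ) 0 0) (hne g.1 g.2 i 0)),
       (fun m => Units.mk0 ((g.1 0 : Matrix (Fin n) (Fin n) ℂ) ⟨m.1 + 1, by omega⟩ ⟨m.1 + 1, by omega⟩)
         (hne g.1 g.2 0 _))),
    fun p => ⟨fun i => Stmt14Aux.ginv (Stmt14Aux.dvec p i), ?_⟩, ?_, ?_⟩, ?_⟩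
  · -- membership of the inverse map
    refine (hchar _).mpr ⟨fun i k l hkl => ?_, fun i j k hk => ?_⟩
    · rw [Stmt14Aux.ginv_coe]
      exact Matrix.diagonal_apply_ne _ hkl
    · rw [Stmt14Aux.ginv_coe, Stmt14Aux.ginv_coe, Matrix.diagonal_apply_eq,
        Matrix.diagonal_apply_eq, Stmt14Aux.dvec_ne_zero p i k hk,
        Stmt14Aux.dvec_ne_zero p j k hk]
  · -- left inverse
    intro g
    apply Subtype.ext
    funext i
    apply Units.ext
    dsimp only
    rw [Stmt14Aux.ginv_coe]
    ext k l
    rw [Matrix.diagonal_apply]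
    split_ifs with hkl
    · subst hkl
      by_cases hk : k = 0
      · subst hk
        rw [Stmt14Aux.dvec_zero]
        rfl
      · rw [Stmt14Aux.dvec_ne_zero _ _ _ hk]
        have hk' : k.1 ≠ 0 := fun h => hk (Fin.ext (by simp [h]))
        have hkeq : (⟨k.1 - 1 + 1, by omega⟩ : Fin n) = k :=
          Fin.ext (show k.1 - 1 + 1 = k.1 by omega)
        simp only [Units.val_mk0]
        rw [hkeq]
        exact ((hchar g.1).mp g.2).2 0 i k hk
    · exact (((hchar g.1).mp g.2).1 i k l hkl).symm
  · -- right inverse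
    intro p
    refine Prod.ext (funext fun i => Units.ext ?_) (funext fun m => Units.ext ?_)
    · dsimp only
      rw [Units.val_mk0, Stmt14Aux.ginv_coe, Matrix.diagonal_apply_eq, Stmt14Aux.dvec_zero]
    · dsimp only
      rw [Units.val_mk0, Stmt14Aux.ginv_coe, Matrix.diagonal_apply_eq,
        Stmt14Aux.dvec_ne_zero p 0 ⟨m.1 + 1, by omega⟩ (by
          intro h
          have := congrArg Fin.val h
          simp at this)]
      congr 2
  · -- multiplicative
    intro g h
    refine Prod.ext (funext fun i => Units.ext ?_) (funext fun m => Units.ext ?_)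
    · simp only [Units.val_mul, Units.val_mk0]
      have h1 : ((g * h).1 i : Matrix (Fin n) (Fin n) ℂ)
          = (g.1 i : Matrix (Fin n) (Fin n) ℂ) * (h.1 i : Matrix (Fin n) (Fin n) ℂ) := rfl
      rw [h1, Stmt14Aux.mul_diag_entry _ _ (fun k l hkl => ((hchar g.1).mp g.2).1 i k l hkl)]
      rfl
    · simp only [Units.val_mul, Units.val_mk0]
      have h1 : ((g * h).1 0 : Matrix (Fin n) (Fin n) ℂ)
          = (g.1 0 : Matrix (Fin n) (Fin n) ℂ) * (h.1 0 : Matrix (Fin n) (Fin n) ℂ) := rfl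
      rw [h1, Stmt14Aux.mul_diag_entry _ _ (fun k l hkl => ((hchar g.1).mp g.2).1 0 k l hkl)]
      rfl


end
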